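/- arXiv:2405.15303 — 2 statements merged into one kernel-verified Lean document; each statement's English description precedes it below -/
import Mathlib

section
/- Let 𝕏 × 𝕋 be finite with objective map f : 𝕏 × 𝕋 → ℝ^k, let Z* be the Pareto-optimal set of 𝕏 × 𝕋, and X*_Trj = {x ∈ 𝕏 : ∃ t ∈ 𝕋, (x, t) ∈ Z*}. Then the Pareto-optimal set of X*_Trj × 𝕋 (under f restricted to it) equals Z*. -/
def dominates {k : ℕ} (u v : Fin k → ℝ) : Prop :=
  (∀ i, u i ≤ v i) ∧ ∃ j, u j < v j

def paretoSet {α : Type*} {k : ℕ} (S : Set α) (f : α → Fin k → ℝ) : Set α :=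
  {z ∈ S | ¬ ∃ z' ∈ S, dominates (f z') (f z)}

theorem paretoSet_trjSet_prod_eq {X T : Type*} [Finite X] [Finite T] {k : ℕ}
    (f : X × T → Fin k → ℝ) :
    paretoSet
      ({x : X | ∃ t : T, (x, t) ∈ paretoSet Set.univ f} ×ˢ (Set.univ : Set T)) f
      = paretoSet Set.univ f := by
  have hdom : ∀ u v : Fin k → ℝ, dominates u v ↔ u < v := by
    intro u v
    constructor
    · rintro ⟨hle, j, hj⟩
      exact lt_of_le_of_ne (fun i => hle i) (fun h => absurd (congrFun h j) hj.ne)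
    · intro h
      refine ⟨fun i => h.le i, ?_⟩
      by_contra hc
      push_neg at hc
      exact h.ne (le_antisymm h.le (fun i => hc i))
  -- any dominated point is dominated by a Pareto point
  have hkey : ∀ z : X × T, z ∉ paretoSet Set.univ f →
      ∃ m ∈ paretoSet Set.univ f, dominates (f m) (f z) := by
    intro z hz
    simp only [paretoSet, Set.mem_setOf_eq, Set.mem_univ, true_and, not_not] at hz
    obtain ⟨z', hz'⟩ := hz
    have hA : ({w : X × T | dominates (f w) (f z)}).Finite := Set.toFinite _
    obtain ⟨m, hm, hmin⟩ := Set.Finite.exists_minimalFor f _ hA ⟨z', hz'⟩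
    refine ⟨m, ?_, hm⟩
    simp only [paretoSet, Set.mem_setOf_eq, Set.mem_univ, true_and]
    rintro ⟨w, hw⟩
    have hm' : dominates (f m) (f z) := hm
    have hwz : dominates (f w) (f z) := (hdom _ _).mpr (((hdom _ _).mp hw).trans ((hdom _ _).mp hm'))
    have := hmin (j := w) hwz ((hdom _ _).mp hw).le
    exact absurd (le_antisymm ((hdom _ _).mp hw).le this) ((hdom _ _).mp hw).ne
  ext z
  constructor
  · rintro ⟨hzS, hnd⟩
    by_contra hz
    obtain ⟨m, hm, hmd⟩ := hkey z hz
    exact hnd ⟨m, ⟨⟨m.2, (Prod.mk.eta ▸ hm : (m.1, m.2) ∈ _)⟩, Set.mem_univ _⟩, hmd⟩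
  · rintro ⟨-, hnd⟩
    refine ⟨⟨⟨z.2, (Prod.mk.eta ▸ ⟨Set.mem_univ z, hnd⟩ : (z.1, z.2) ∈ _)⟩, Set.mem_univ _⟩, ?_⟩
    rintro ⟨z', -, hz'⟩
    exact hnd ⟨z', Set.mem_univ _, hz'⟩
end

section
/- If y ≤ r componentwise and y strictly dominates r in every coordinate (y_i < r_i for all i), and no point of F weakly dominates y, then HVI(y | F, r) > 0 whenever F is finite. -/
noncomputable def HV {k : ℕ} (F : Set (Fin k → ℝ)) (r : Fin k → ℝ) : ℝ :=
  (MeasureTheory.volume (⋃ y ∈ {y ∈ F | y ≤ r}, Set.Icc y r)).toReal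

open MeasureTheory Set

theorem HVI_pos {k : ℕ} (F : Set (Fin k → ℝ)) (hF : F.Finite)
    (y r : Fin k → ℝ) (hyr : ∀ i, y i < r i)
    (hnd : ¬ ∃ y' ∈ F, y' ≤ y) :
    0 < HV (F ∪ {y}) r - HV F r := by
  classical
  push_neg at hnd
  rcases isEmpty_or_nonempty (Fin k) with hk | hk
  · have hFe : F = ∅ := by
      ext x
      simp only [Set.mem_empty_iff_false, iff_false]
      intro hx
      exact hnd x hx (fun i => isEmptyElim i)
    have hy_r : y ≤ r := fun i => isEmptyElim i
    have h1 : {x ∈ F | x ≤ r} = (∅ : Set (Fin k → ℝ)) := by rw [hFe]; simp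
    have h2 : {x ∈ F ∪ {y} | x ≤ r} = ({y} : Set (Fin k → ℝ)) := by
      rw [hFe]; ext x
      simp only [Set.mem_sep_iff, Set.empty_union, Set.mem_singleton_iff]
      exact ⟨fun h => h.1, fun h => ⟨h, h ▸ hy_r⟩⟩
    unfold HV
    rw [h1, h2]
    simp only [Set.biUnion_singleton, Set.biUnion_empty, measure_empty,
      ENNReal.toReal_zero, sub_zero, Real.volume_Icc_pi]
    rw [Finset.prod_of_isEmpty]
    norm_num
  set T : Finset (Fin k → ℝ) := hF.toFinset.filter (fun y' => y' ≤ r) with hT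
  have hw : ∀ y' ∈ T, ∃ i, y i < y' i := by
    intro y' hy'
    rw [hT, Finset.mem_filter, Set.Finite.mem_toFinset] at hy'
    have h1 := hnd y' hy'.1
    rcases not_forall.mp (fun h => h1 h) with ⟨i, hi⟩
    exact ⟨i, lt_of_not_ge hi⟩
  choose! idx hidx using hw
  set ε : ℝ := if h : T.Nonempty then T.inf' h (fun y' => y' (idx y') - y (idx y')) else 1
    with hε
  have hεpos : 0 < ε := by
    rw [hε]; split_ifs with h
    · exact (Finset.lt_inf'_iff h).mpr fun b hb => sub_pos.mpr (hidx b hb)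
    · norm_num
  set z : Fin k → ℝ := fun i => y i + min ((r i - y i) / 2) (ε / 2) with hz
  have hzi : ∀ i, z i = y i + min ((r i - y i) / 2) (ε / 2) := fun i => by rw [hz]
  clear_value ε z
  have hyz : ∀ i, y i < z i := fun i => by
    rw [hzi i]
    exact lt_add_of_pos_right _ (lt_min (by linarith [hyr i]) (by linarith))
  have hzr : ∀ i, z i ≤ r i := fun i => by
    have := min_le_left ((r i - y i) / 2) (ε / 2)
    rw [hzi i]; linarith [hyr i]
  set B : Set (Fin k → ℝ) := Set.Icc y z with hB
  set A : Set (Fin k → ℝ) := ⋃ y' ∈ {y' ∈ F | y' ≤ r}, Set.Icc y' r with hA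
  -- B is disjoint from A
  have hdisj : Disjoint A B := by
    rw [Set.disjoint_left]
    intro x hxA hxB
    simp only [hA, Set.mem_iUnion, Set.mem_sep_iff] at hxA
    obtain ⟨y', ⟨hy'F, hy'r⟩, hx⟩ := hxA
    have hy'T : y' ∈ T := by rw [hT, Finset.mem_filter, Set.Finite.mem_toFinset]; exact ⟨hy'F, hy'r⟩
    have hεle : ε ≤ y' (idx y') - y (idx y') := by
      rw [hε]; rw [dif_pos ⟨y', hy'T⟩]
      exact Finset.inf'_le _ hy'T
    have h1 : x (idx y') ≤ z (idx y') := hxB.2 _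
    have h2 : y' (idx y') ≤ x (idx y') := hx.1 _
    have h3 : z (idx y') ≤ y (idx y') + ε / 2 := by
      rw [hzi]; exact add_le_add le_rfl (min_le_right _ _)
    have h4 := hidx y' hy'T
    linarith
  have hBmeas : MeasurableSet B := measurableSet_Icc
  -- volumes
  have hBpos : 0 < volume B := by
    rw [hB, Real.volume_Icc_pi]
    refine CanonicallyOrderedAdd.prod_pos.mpr fun i _ => ?_
    exact ENNReal.ofReal_pos.mpr (by linarith [hyz i])
  have hAfin : volume A < ⊤ := by
    have : A ⊆ ⋃ y' ∈ T, Set.Icc y' r := by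
      intro x hx
      simp only [hA, Set.mem_iUnion, Set.mem_sep_iff] at hx
      obtain ⟨y', ⟨h1, h2⟩, h3⟩ := hx
      exact Set.mem_biUnion (show y' ∈ T by rw [hT]; exact Finset.mem_filter.mpr ⟨hF.mem_toFinset.mpr h1, h2⟩) h3
    refine lt_of_le_of_lt (measure_mono this) ?_
    refine lt_of_le_of_lt (measure_biUnion_finset_le T _) ?_
    exact ENNReal.sum_lt_top.mpr fun y' _ => (isCompact_Icc.measure_lt_top)
  -- the key set identity
  have hset : {x ∈ F ∪ {y} | x ≤ r} = {y' ∈ F | y' ≤ r} ∪ {y} := by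
    ext x
    simp only [Set.mem_sep_iff, Set.mem_union, Set.mem_singleton_iff]
    constructor
    · rintro ⟨h1 | h1, h2⟩
      · exact Or.inl ⟨h1, h2⟩
      · exact Or.inr h1
    · rintro (⟨h1, h2⟩ | h1)
      · exact ⟨Or.inl h1, h2⟩
      · exact ⟨Or.inr h1, h1 ▸ fun i => (hyr i).le⟩
  have hunion : (⋃ x ∈ {x ∈ F ∪ {y} | x ≤ r}, Set.Icc x r) = A ∪ Set.Icc y r := by
    rw [hset, Set.biUnion_union, Set.biUnion_singleton, hA]
  have hBsub : B ⊆ Set.Icc y r := Set.Icc_subset_Icc le_rfl (fun i => hzr i)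
  have hkey : volume A + volume B ≤ volume (A ∪ Set.Icc y r) := by
    rw [← measure_union hdisj hBmeas]
    exact measure_mono (Set.union_subset_union_right A hBsub)
  have hfin2 : volume (A ∪ Set.Icc y r) < ⊤ :=
    lt_of_le_of_lt (measure_union_le _ _)
      (ENNReal.add_lt_top.mpr ⟨hAfin, isCompact_Icc.measure_lt_top⟩)
  have hlt : volume A < volume (A ∪ Set.Icc y r) :=
    lt_of_lt_of_le (ENNReal.lt_add_right hAfin.ne hBpos.ne') hkey
  have : (volume A).toReal < (volume (A ∪ Set.Icc y r)).toReal :=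
    (ENNReal.toReal_lt_toReal hAfin.ne hfin2.ne).mpr hlt
  unfold HV
  rw [hunion]
  rw [← hA]
  linarith
end
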